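/- Let i : A → B be a bounded algebra homomorphism between Banach algebras satisfying ‖ab‖_A ≤ D(‖a‖_A ‖i(b)‖_B + ‖i(a)‖_B ‖b‖_A) for all a,b ∈ A. Then the second adjoint i** : A** → B**, with both biduals equipped with the left (first) Arens product, satisfies ‖FG‖ ≤ D(‖F‖ ‖i**(G)‖ + ‖i**(F)‖ ‖G‖) for all F, G ∈ A**. -/

import Mathlib

set_option maxHeartbeats 1000000
open NormedSpace ContinuousLinearMap

lemma decomp {A B : Type*} [NormedAddCommGroup A] [NormedSpace ℂ A]
    [NormedAddCommGroup B] [NormedSpace ℂ B]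
    (i : A →L[ℂ] B) (χ : StrongDual ℂ A) (α β : ℝ) (hα : 0 ≤ α) (hβ : 0 ≤ β)
    (hχ : ∀ b : A, ‖χ b‖ ≤ α * ‖b‖ + β * ‖i b‖) (ε : ℝ) (hε : 0 < ε) :
    ∃ (χ₁ : StrongDual ℂ A) (ξ : StrongDual ℂ B),
      (∀ b : A, χ b = χ₁ b + ξ (i b)) ∧ ‖χ₁‖ ≤ α + ε ∧ ‖ξ‖ ≤ β + ε := by
  set α' : ℝ := α + ε with hα'
  set β' : ℝ := β + ε with hβ'
  have hα'0 : 0 < α' := by positivity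
  have hβ'0 : 0 < β' := by positivity
  set E := WithLp 1 (A × B) with hE
  set j : A →ₗ[ℂ] E :=
    (WithLp.linearEquiv 1 ℂ (A × B)).symm.toLinearMap ∘ₗ
      (LinearMap.prod ((α' : ℂ) • LinearMap.id) ((β' : ℂ) • (i : A →ₗ[ℂ] B))) with hj
  have hjfst : ∀ b : A, (j b).fst = (α' : ℂ) • b := fun b => rfl
  have hjsnd : ∀ b : A, (j b).snd = (β' : ℂ) • i b := fun b => rfl
  have hnormE : ∀ x : E, ‖x‖ = ‖x.fst‖ + ‖x.snd‖ := by
    intro x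
    rw [WithLp.prod_norm_eq_add (by norm_num)]
    simp
  have hjnorm : ∀ b : A, ‖j b‖ = α' * ‖b‖ + β' * ‖i b‖ := by
    intro b
    rw [hnormE, hjfst, hjsnd]
    simp [norm_smul, abs_of_pos hα'0, abs_of_pos hβ'0, Complex.norm_real]
  have hjinj : Function.Injective j := by
    intro a b hab
    have h1 := congrArg (fun x : E => x.fst) hab
    simp only [hjfst] at h1
    have hα'ne : (α' : ℂ) ≠ 0 := by exact_mod_cast hα'0.ne'
    exact smul_right_injective A hα'ne h1
  have hb : ∀ b : A, ‖χ b‖ ≤ ‖j b‖ := by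
    intro b
    rw [hjnorm]
    refine (hχ b).trans ?_
    have := norm_nonneg b; have := norm_nonneg (i b)
    nlinarith
  set S := LinearMap.range j
  set f₀ : S →ₗ[ℂ] ℂ := χ.toLinearMap ∘ₗ (LinearEquiv.ofInjective j hjinj).symm.toLinearMap with hf₀
  have hf₀b : ∀ s : S, ‖f₀ s‖ ≤ 1 * ‖(s : E)‖ := by
    intro s
    obtain ⟨b, hbs⟩ := s.2
    have h1 : (LinearEquiv.ofInjective j hjinj).symm s = b := by
      apply hjinj
      rw [LinearEquiv.ofInjective_symm_apply, hbs]
    simp only [hf₀, LinearMap.comp_apply, h1, one_mul, LinearEquiv.coe_coe,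
      ContinuousLinearMap.coe_coe]
    calc ‖χ b‖ ≤ ‖j b‖ := hb b
    _ = ‖(s : E)‖ := by rw [hbs]
  set f₁ : S →L[ℂ] ℂ := LinearMap.mkContinuous f₀ 1 hf₀b
  obtain ⟨h, hext, hnorm⟩ := exists_extension_norm_eq S f₁
  have hn1 : ‖h‖ ≤ 1 := hnorm.le.trans (LinearMap.mkContinuous_norm_le f₀ zero_le_one hf₀b)
  have hjb : ∀ b : A, h (j b) = χ b := by
    intro b
    have h2 := hext ⟨j b, LinearMap.mem_range_self j b⟩
    rw [h2]; change f₀ ⟨j b, LinearMap.mem_range_self j b⟩ = χ b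
    have hrep : (LinearEquiv.ofInjective j hjinj).symm ⟨j b, LinearMap.mem_range_self j b⟩ = b := by
      apply hjinj; rw [LinearEquiv.ofInjective_symm_apply]
    simp only [hf₀, LinearMap.comp_apply, LinearEquiv.coe_coe, hrep, ContinuousLinearMap.coe_coe]
  -- embeddings
  set eE : E ≃L[ℂ] A × B := WithLp.prodContinuousLinearEquiv 1 ℂ A B with heE
  set inlE : A →L[ℂ] E := (eE.symm : (A × B) →L[ℂ] E).comp (ContinuousLinearMap.inl ℂ A B) with hinl
  set inrE : B →L[ℂ] E := (eE.symm : (A × B) →L[ℂ] E).comp (ContinuousLinearMap.inr ℂ A B) with hinr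
  have hinlfst : ∀ a : A, (inlE a).fst = a := fun a => rfl
  have hinlsnd : ∀ a : A, (inlE a).snd = (0 : B) := fun a => rfl
  have hinrfst : ∀ b : B, (inrE b).fst = (0 : A) := fun b => rfl
  have hinrsnd : ∀ b : B, (inrE b).snd = b := fun b => rfl
  have hinlnorm : ∀ a : A, ‖inlE a‖ = ‖a‖ := by
    intro a; rw [hnormE, hinlfst, hinlsnd]; simp
  have hinrnorm : ∀ b : B, ‖inrE b‖ = ‖b‖ := by
    intro b; rw [hnormE, hinrfst, hinrsnd]; simp
  refine ⟨(α' : ℂ) • h.comp inlE, (β' : ℂ) • h.comp inrE, ?_, ?_, ?_⟩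
  · intro b
    have hdecomp : (α' : ℂ) • inlE b + (β' : ℂ) • inrE (i b) = j b := by
      apply eE.injective
      rw [map_add, map_smul, map_smul]
      have h1 : eE (inlE b) = (b, 0) := rfl
      have h2 : eE (inrE (i b)) = (0, i b) := rfl
      have h3 : eE (j b) = ((α' : ℂ) • b, (β' : ℂ) • i b) := rfl
      rw [h1, h2, h3, Prod.smul_mk, Prod.smul_mk, Prod.mk_add_mk]
      simp
    rw [← hjb b, ← hdecomp]
    simp [map_add]
  · refine opNorm_le_bound _ (le_of_lt hα'0) fun b => ?_
    have happ : ((α' : ℂ) • h.comp inlE) b = (α' : ℂ) • (h (inlE b)) := rfl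
    rw [happ, norm_smul, Complex.norm_real, Real.norm_eq_abs]
    calc |α'| * ‖h (inlE b)‖ ≤ α' * (‖h‖ * ‖inlE b‖) := by
          rw [abs_of_pos hα'0]
          exact mul_le_mul_of_nonneg_left (h.le_opNorm _) hα'0.le
    _ ≤ α' * ‖b‖ := by
          rw [hinlnorm]
          exact mul_le_mul_of_nonneg_left (mul_le_of_le_one_left (norm_nonneg b) hn1) hα'0.le
  · refine opNorm_le_bound _ (le_of_lt hβ'0) fun b => ?_
    have happ : ((β' : ℂ) • h.comp inrE) b = (β' : ℂ) • (h (inrE b)) := rfl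
    rw [happ, norm_smul, Complex.norm_real, Real.norm_eq_abs]
    calc |β'| * ‖h (inrE b)‖ ≤ β' * (‖h‖ * ‖inrE b‖) := by
          rw [abs_of_pos hβ'0]
          exact mul_le_mul_of_nonneg_left (h.le_opNorm _) hβ'0.le
    _ ≤ β' * ‖b‖ := by
          rw [hinrnorm]
          exact mul_le_mul_of_nonneg_left (mul_le_of_le_one_left (norm_nonneg b) hn1) hβ'0.le

lemma eps_le {x y c : ℝ} (hc : 0 ≤ c) (h : ∀ ε > 0, x ≤ y + ε * c) : x ≤ y := by
  refine le_of_forall_pos_le_add fun δ hδ => ?_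
  have h1 := h (δ / (c + 1)) (by positivity)
  have h2 : δ / (c + 1) * c ≤ δ := by
    rw [div_mul_eq_mul_div, div_le_iff₀ (by positivity)]
    nlinarith
  linarith

theorem stmt_13 {A B : Type*} [NormedRing A] [NormedAlgebra ℂ A]
    [NormedRing B] [NormedAlgebra ℂ B]
    (i : A →L[ℂ] B) (himul : ∀ a b : A, i (a * b) = i a * i b)
    (D : ℝ) (hD : ∀ a b : A, ‖a * b‖ ≤ D * (‖a‖ * ‖i b‖ + ‖i a‖ * ‖b‖))
    (m : StrongDual ℂ (StrongDual ℂ A) → StrongDual ℂ (StrongDual ℂ A) → StrongDual ℂ (StrongDual ℂ A))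
    (hm : ∀ (F G : StrongDual ℂ (StrongDual ℂ A)) (φ : StrongDual ℂ A),
      m F G φ = F (G.comp (((compL ℂ A A ℂ) φ).comp (mul ℂ A)))) :
    ∀ F G : StrongDual ℂ (StrongDual ℂ A),
      ‖m F G‖ ≤ D * (‖F‖ * ‖G.comp ((compL ℂ A B ℂ).flip i)‖
        + ‖F.comp ((compL ℂ A B ℂ).flip i)‖ * ‖G‖) := by
  intro F G
  have hflip : ∀ ξ : StrongDual ℂ B, ((compL ℂ A B ℂ).flip i) ξ = ξ.comp i := fun ξ => rfl
  rcases lt_or_ge D 0 with hDneg | hD0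
  · -- degenerate case : i = 0 and all products vanish
    have hi0 : ∀ a : A, i a = 0 := by
      intro a
      by_cases ha : a = 0
      · simp [ha]
      have h1 := hD a a
      have h2 : 0 ≤ ‖a * a‖ := norm_nonneg _
      have h3 : ‖a‖ * ‖i a‖ ≤ 0 := by nlinarith
      have h4 : 0 < ‖a‖ := norm_pos_iff.mpr ha
      have h5 : ‖i a‖ ≤ 0 := by nlinarith
      exact norm_le_zero_iff.mp h5
    have hmul0 : ∀ a b : A, a * b = 0 := by
      intro a b
      have h1 := hD a b
      simp [hi0] at h1
      exact h1
    have hGi : ∀ H : StrongDual ℂ (StrongDual ℂ A), H.comp ((compL ℂ A B ℂ).flip i) = 0 := by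
      intro H
      ext ξ
      have : ((compL ℂ A B ℂ).flip i) ξ = 0 := by
        rw [hflip]; ext a; simp [hi0]
      simp [this]
    have hm0 : m F G = 0 := by
      ext φ
      rw [hm]
      have hT : G.comp (((compL ℂ A A ℂ) φ).comp (mul ℂ A)) = 0 := by
        ext a
        have h0 : φ.comp ((mul ℂ A) a) = (0 : StrongDual ℂ A) := by
          ext b
          show φ (a * b) = 0
          rw [hmul0]; simp
        simp [h0]
      simp [hT]
    rw [hm0, hGi F, hGi G]
    simp
    exact (norm_zero (E := StrongDual ℂ (StrongDual ℂ A))).le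
  · -- main case
    set Gi := G.comp ((compL ℂ A B ℂ).flip i) with hGidef
    set Fi := F.comp ((compL ℂ A B ℂ).flip i) with hFidef
    refine opNorm_le_bound _ (by positivity) fun φ => ?_
    set T : A →L[ℂ] StrongDual ℂ A := ((compL ℂ A A ℂ) φ).comp (mul ℂ A) with hTdef
    have hTapp : ∀ a b : A, T b a = φ (b * a) := fun a b => rfl
    -- Step A: pointwise bound on G ∘ T
    have stepA : ∀ b : A, ‖G (T b)‖ ≤ (D * ‖φ‖ * ‖Gi‖) * ‖b‖ + (D * ‖φ‖ * ‖G‖) * ‖i b‖ := by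
      intro b
      have hbound : ∀ a : A, ‖(T b) a‖ ≤ (D * ‖φ‖ * ‖i b‖) * ‖a‖ + (D * ‖φ‖ * ‖b‖) * ‖i a‖ := by
        intro a
        rw [hTapp]
        calc ‖φ (b * a)‖ ≤ ‖φ‖ * ‖b * a‖ := φ.le_opNorm _
        _ ≤ ‖φ‖ * (D * (‖b‖ * ‖i a‖ + ‖i b‖ * ‖a‖)) := by
            refine mul_le_mul_of_nonneg_left (hD b a) (norm_nonneg φ)
        _ = (D * ‖φ‖ * ‖i b‖) * ‖a‖ + (D * ‖φ‖ * ‖b‖) * ‖i a‖ := by ring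
      refine eps_le (c := ‖G‖ + ‖Gi‖) (by positivity) fun ε hε => ?_
      obtain ⟨χ₁, ξ, heq, hn1, hn2⟩ := decomp i (T b) _ _ (by positivity) (by positivity)
        hbound ε hε
      have hTeq : T b = χ₁ + ((compL ℂ A B ℂ).flip i) ξ := by
        ext a; rw [heq a, hflip]; rfl
      have : G (T b) = G χ₁ + Gi ξ := by
        rw [hTeq, map_add, hGidef]; rfl
      rw [this]
      calc ‖G χ₁ + Gi ξ‖ ≤ ‖G χ₁‖ + ‖Gi ξ‖ := norm_add_le _ _
      _ ≤ ‖G‖ * ‖χ₁‖ + ‖Gi‖ * ‖ξ‖ := add_le_add (G.le_opNorm _) (Gi.le_opNorm _)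
      _ ≤ ‖G‖ * (D * ‖φ‖ * ‖i b‖ + ε) + ‖Gi‖ * (D * ‖φ‖ * ‖b‖ + ε) := by
          refine add_le_add (mul_le_mul_of_nonneg_left hn1 (norm_nonneg G))
            (mul_le_mul_of_nonneg_left hn2 (norm_nonneg Gi))
      _ ≤ (D * ‖φ‖ * ‖Gi‖) * ‖b‖ + (D * ‖φ‖ * ‖G‖) * ‖i b‖ + ε * (‖G‖ + ‖Gi‖) := by ring_nf; linarith
    -- Step B
    have stepB : ‖m F G φ‖ ≤ D * (‖F‖ * ‖Gi‖ + ‖Fi‖ * ‖G‖) * ‖φ‖ := by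
      have hbound : ∀ b : A, ‖(G.comp T) b‖ ≤ (D * ‖φ‖ * ‖Gi‖) * ‖b‖ + (D * ‖φ‖ * ‖G‖) * ‖i b‖ :=
        fun b => stepA b
      refine eps_le (c := ‖F‖ + ‖Fi‖) (by positivity) fun ε hε => ?_
      obtain ⟨χ₁, ξ, heq, hn1, hn2⟩ := decomp i (G.comp T) _ _ (by positivity) (by positivity)
        hbound ε hε
      have hTeq : G.comp T = χ₁ + ((compL ℂ A B ℂ).flip i) ξ := by
        ext a; rw [heq a, hflip]; rfl
      have hval : m F G φ = F χ₁ + Fi ξ := by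
        rw [hm, ← hTdef, hTeq, map_add, hFidef]; rfl
      rw [hval]
      calc ‖F χ₁ + Fi ξ‖ ≤ ‖F χ₁‖ + ‖Fi ξ‖ := norm_add_le _ _
      _ ≤ ‖F‖ * ‖χ₁‖ + ‖Fi‖ * ‖ξ‖ := add_le_add (F.le_opNorm _) (Fi.le_opNorm _)
      _ ≤ ‖F‖ * (D * ‖φ‖ * ‖Gi‖ + ε) + ‖Fi‖ * (D * ‖φ‖ * ‖G‖ + ε) := by
          exact add_le_add (mul_le_mul_of_nonneg_left hn1 (norm_nonneg F))
            (mul_le_mul_of_nonneg_left hn2 (norm_nonneg Fi))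
      _ ≤ D * (‖F‖ * ‖Gi‖ + ‖Fi‖ * ‖G‖) * ‖φ‖ + ε * (‖F‖ + ‖Fi‖) := by ring_nf; linarith
    exact stepB
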